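/- arXiv:2101.00765 — 2 statements merged into one kernel-verified Lean document; each statement's English description precedes it below -/
import Mathlib

section
/- Let V be a finite-dimensional real inner product space and A a finite multiset of vectors in V. Then the following are equivalent: (i) for every ξ ∈ V, the multiset of real numbers {⟨a, ξ⟩ : a ∈ A} (with multiplicity) is invariant under multiplication by −1; (ii) the multiset A is invariant under multiplication by −1. -/
open scoped RealInnerProductSpace

/-- If `f` is injective on the elements of `s` and `t` and the images agree,
then the multisets agree. -/
lemma multiset_map_injOn_eq {α β : Type*} [DecidableEq α] [DecidableEq β]
    {s t : Multiset α} {f : α → β}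
    (hf : Set.InjOn f {x | x ∈ s ∨ x ∈ t}) (h : s.map f = t.map f) : s = t := by
  have key : ∀ x, x ∈ s ∨ x ∈ t → s.count x = t.count x := by
    intro x hx
    have hs : (s.map f).count (f x) = s.count x := by
      by_cases hxs : x ∈ s
      · exact Multiset.count_map_eq_count f s (hf.mono (by intro y hy; exact Or.inl hy)) x hxs
      · rw [Multiset.count_eq_zero_of_notMem hxs, Multiset.count_eq_zero]
        intro hmem
        obtain ⟨y, hy, hyx⟩ := Multiset.mem_map.1 hmem
        exact hxs (hf (Or.inl hy) hx hyx ▸ hy)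
    have ht : (t.map f).count (f x) = t.count x := by
      by_cases hxt : x ∈ t
      · exact Multiset.count_map_eq_count f t (hf.mono (by intro y hy; exact Or.inr hy)) x hxt
      · rw [Multiset.count_eq_zero_of_notMem hxt, Multiset.count_eq_zero]
        intro hmem
        obtain ⟨y, hy, hyx⟩ := Multiset.mem_map.1 hmem
        exact hxt (hf (Or.inr hy) hx hyx ▸ hy)
    rw [← hs, ← ht, h]
  ext x
  by_cases hx : x ∈ s ∨ x ∈ t
  · exact key x hx
  · push_neg at hx
    rw [Multiset.count_eq_zero_of_notMem hx.1, Multiset.count_eq_zero_of_notMem hx.2]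

theorem stmt0 (V : Type*) [NormedAddCommGroup V] [InnerProductSpace ℝ V]
    [FiniteDimensional ℝ V] (A : Multiset V) :
    (∀ ξ : V, (A.map (fun a => ⟪a, ξ⟫)).map (fun x => -x) = A.map (fun a => ⟪a, ξ⟫)) ↔
      A.map (fun a => -a) = A := by
  classical
  constructor
  · intro h
    set B : Multiset V := A.map (fun a => -a) with hB
    -- rewrite the hypothesis
    have h' : ∀ ξ : V, B.map (fun a => ⟪a, ξ⟫) = A.map (fun a => ⟪a, ξ⟫) := by
      intro ξ
      rw [hB, Multiset.map_map, ← h ξ, Multiset.map_map]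
      congr 1
      funext a
      simp [inner_neg_left]
    -- the finite set of relevant vectors
    set S : Finset V := (B + A).toFinset with hS
    -- find a generic direction ξ
    set D : Finset (V × V) := (S ×ˢ S).filter (fun p => p.1 ≠ p.2) with hD
    have : ∃ ξ : V, ∀ i : ↥D, ξ ∉ (LinearMap.ker ((innerSL ℝ ((i : V × V).1 - (i : V × V).2) : V →ₗ[ℝ] ℝ)) : Subspace ℝ V) := by
      by_contra hc
      push_neg at hc
      have hcov : ⋃ i : ↥D, ((LinearMap.ker ((innerSL ℝ ((i : V × V).1 - (i : V × V).2) : V →ₗ[ℝ] ℝ)) : Subspace ℝ V) : Set V) = Set.univ := by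
        ext ξ
        simp only [Set.mem_iUnion, Set.mem_univ, iff_true]
        obtain ⟨i, hi⟩ := hc ξ
        exact ⟨i, hi⟩
      obtain ⟨i, hi⟩ := Subspace.exists_eq_top_of_iUnion_eq_univ hcov
      have hne : (i : V × V).1 ≠ (i : V × V).2 := (Finset.mem_filter.1 i.2).2
      have : (i : V × V).1 - (i : V × V).2 ∈ LinearMap.ker ((innerSL ℝ ((i : V × V).1 - (i : V × V).2) : V →ₗ[ℝ] ℝ)) := by
        rw [hi]; trivial
      rw [LinearMap.mem_ker] at this
      simp only [ContinuousLinearMap.coe_coe, innerSL_apply_apply] at this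
      exact hne (sub_eq_zero.1 (inner_self_eq_zero.1 this))
    obtain ⟨ξ, hξ⟩ := this
    have hinj : Set.InjOn (fun a => ⟪a, ξ⟫) {x | x ∈ B ∨ x ∈ A} := by
      intro x hx y hy hxy
      by_contra hne
      have hxS : x ∈ S := by
        rw [hS, Multiset.mem_toFinset, Multiset.mem_add]; exact hx
      have hyS : y ∈ S := by
        rw [hS, Multiset.mem_toFinset, Multiset.mem_add]; exact hy
      have hmem : (x, y) ∈ D := Finset.mem_filter.2 ⟨Finset.mem_product.2 ⟨hxS, hyS⟩, hne⟩
      have := hξ ⟨(x, y), hmem⟩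
      rw [LinearMap.mem_ker] at this
      apply this
      simp only [ContinuousLinearMap.coe_coe, innerSL_apply_apply, inner_sub_left]
      simpa using sub_eq_zero.2 hxy
    exact multiset_map_injOn_eq hinj (h' ξ)
  · intro h ξ
    conv_lhs => rw [← h]
    simp only [Multiset.map_map]
    congr 1
    funext a
    simp [inner_neg_left]
end

section
/- Suppose x ∈ (0, π/4) satisfies at least one of: cot x = tan x, cot x = tan(x + π/4), or cot x = 2 tan(2x). Then x = π/8 or (cot x)² = 5. (Note cot x = tan x has no solution in (0, π/4).) -/
open Real Set

theorem stmt13 (x : ℝ) (hx : x ∈ Set.Ioo 0 (Real.pi / 4))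
    (h : Real.cot x = Real.tan x ∨ Real.cot x = Real.tan (x + Real.pi / 4) ∨
      Real.cot x = 2 * Real.tan (2 * x)) :
    x = Real.pi / 8 ∨ (Real.cot x) ^ 2 = 5 := by
  obtain ⟨hx0, hx4⟩ := hx
  have hpi := Real.pi_pos
  have hsin : Real.sin x > 0 := Real.sin_pos_of_pos_of_lt_pi hx0 (by linarith)
  have hcos : Real.cos x > 0 := Real.cos_pos_of_mem_Ioo ⟨by linarith, by linarith⟩
  have hcos2 : Real.cos (2 * x) > 0 := Real.cos_pos_of_mem_Ioo ⟨by linarith, by linarith⟩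
  have hs2 : Real.sin x ^ 2 + Real.cos x ^ 2 = 1 := Real.sin_sq_add_cos_sq x
  rcases h with h | h | h
  · -- cot x = tan x : impossible
    exfalso
    rw [Real.cot_eq_cos_div_sin, Real.tan_eq_sin_div_cos] at h
    have h2 : Real.cos x ^ 2 = Real.sin x ^ 2 := by
      field_simp at h; nlinarith [h]
    have : Real.cos (2 * x) = 0 := by
      rw [Real.cos_two_mul]; nlinarith
    linarith
  · -- cot x = tan (x + π/4)
    left
    have h1 : Real.tan (Real.pi / 2 - x) = Real.tan (x + Real.pi / 4) := by
      rw [Real.tan_pi_div_two_sub, ← h, Real.cot_eq_cos_div_sin,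
        Real.tan_eq_sin_div_cos, inv_div]
    have h2 : Real.pi / 2 - x = x + Real.pi / 4 :=
      Real.injOn_tan ⟨by linarith, by linarith⟩ ⟨by linarith, by linarith⟩ h1
    linarith
  · -- cot x = 2 tan 2x
    right
    rw [Real.cot_eq_cos_div_sin, Real.tan_eq_sin_div_cos,
      Real.sin_two_mul, Real.cos_two_mul] at h
    have hsne : Real.sin x ≠ 0 := ne_of_gt hsin
    have hcne : Real.cos x ≠ 0 := ne_of_gt hcos
    have hc2ne : 2 * Real.cos x ^ 2 - 1 ≠ 0 := by
      rw [Real.cos_two_mul] at hcos2; linarith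
    field_simp at h
    have key : 2 * Real.cos x ^ 2 - 1 = 4 * Real.sin x ^ 2 :=
      mul_left_cancel₀ hcne (by rw [eq_div_iff (by intro h0; apply hc2ne; linarith)] at h; linear_combination Real.cos x * h)
    have hsq : Real.sin x ^ 2 = 1 / 6 := by linarith
    rw [Real.cot_eq_cos_div_sin, div_pow, hsq, div_eq_iff (by norm_num)]
    linarith
end
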